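/- For every k ≥ 6, the porous exponential domination number of the k-th Apollonian network satisfies γ*_e(G_k) ≤ 3^(k-5). -/

import Mathlib

/-- A family of Apollonian networks, given by a vertex set `Vert` together with a
generation labeling `gen` and an adjacency relation `adj`, satisfying the recursive
construction: the first generation `U₁` consists of three pairwise adjacent vertices
(forming `G₁`); and for each `k ≥ 1`, for each vertex `u` of generation `k` and each
adjacent pair `{x, y}` of neighbors of `u` in `G_k`, exactly one new vertex of
generation `k + 1` is created, adjacent to exactly `u`, `x`, and `y`.
The `k`-th Apollonian network `G_k` is the induced subgraph on the vertices of
generation at most `k`. -/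
structure ApollonianNetwork where
  Vert : Type
  adj : Vert → Vert → Prop
  adj_symm : ∀ a b, adj a b → adj b a
  adj_irrefl : ∀ a, ¬ adj a a
  gen : Vert → ℕ
  gen_pos : ∀ v, 1 ≤ gen v
  /-- The first generation consists of exactly three vertices. -/
  U1_card : ∃ a b c : Vert, a ≠ b ∧ a ≠ c ∧ b ≠ c ∧ {v | gen v = 1} = {a, b, c}
  /-- `G₁` is a complete graph on the first generation. -/
  U1_complete : ∀ a b, gen a = 1 → gen b = 1 → a ≠ b → adj a b
  /-- All edges join vertices of distinct generations, except within generation 1. -/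
  adj_gen : ∀ a b, adj a b → gen a = gen b → gen a = 1
  /-- Every vertex `v` of generation `k ≥ 2` is adjacent, among the vertices of earlier
  generations, to exactly three vertices `u`, `x`, `y`, where `u` has generation `k - 1`
  and `x`, `y` are neighbors of `u` in `G_{k-1}` that are adjacent to each other. -/
  created : ∀ v, 2 ≤ gen v → ∃ u x y,
    gen u = gen v - 1 ∧ gen x ≤ gen v - 1 ∧ gen y ≤ gen v - 1 ∧
    adj u x ∧ adj u y ∧ adj x y ∧
    {w | adj v w ∧ gen w < gen v} = {u, x, y}
  /-- For each `k ≥ 1`, each vertex `u` of generation `k`, and each adjacent pair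
  `{x, y}` of neighbors of `u` in `G_k`, there is exactly one vertex of generation
  `k + 1` whose neighbors in `G_{k+1}` are exactly `u`, `x`, and `y`. -/
  attach : ∀ k, 1 ≤ k → ∀ u x y,
    gen u = k → gen x ≤ k → gen y ≤ k → x ≠ y →
    adj u x → adj u y → adj x y →
    ∃! v, gen v = k + 1 ∧ {w | adj v w ∧ gen w ≤ k} = ({u, x, y} : Set Vert)

/-- The `k`-th Apollonian network `G_k`: the induced subgraph on the vertices of
generation at most `k`. -/
def ApollonianNetwork.G (A : ApollonianNetwork) (k : ℕ) :
    SimpleGraph {v : A.Vert // A.gen v ≤ k} where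
  Adj a b := A.adj a b
  symm := ⟨fun a b h => A.adj_symm a b h⟩
  loopless := ⟨fun a h => A.adj_irrefl a h⟩

open Classical in
/-- The porous exponential domination weight of a set `S` at a vertex `v`:
`∑_{u ∈ S} 1 / 2 ^ (d(u, v) - 1)`, where vertices at infinite distance from `v`
contribute `0`.  (Note `2 * (1/2) ^ d = 1 / 2 ^ (d - 1)` including for `d = 0`.) -/
noncomputable def expWeight {V : Type*} (G : SimpleGraph V) (S : Finset V) (v : V) : ℝ :=
  ∑ u ∈ S, if G.Reachable u v then 2 * (2 : ℝ)⁻¹ ^ G.dist u v else 0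

/-- `S` is a porous exponential dominating set for `G` if every vertex receives
total weight at least 1. -/
def IsPorousExpDomSet {V : Type*} (G : SimpleGraph V) (S : Finset V) : Prop :=
  ∀ v, 1 ≤ expWeight G S v

/-- The porous exponential domination number `γ*ₑ(G)`: the smallest cardinality of a
porous exponential dominating set for `G` (`⊤` if there is none). -/
noncomputable def porousExpDomNum {V : Type*} (G : SimpleGraph V) : ℕ∞ :=
  sInf {n : ℕ∞ | ∃ S : Finset V, IsPorousExpDomSet G S ∧ (S.card : ℕ∞) = n}

namespace ApoAux

variable {A : ApollonianNetwork}

lemma adj_ne {a b : A.Vert} (h : A.adj a b) : a ≠ b :=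
  fun he => A.adj_irrefl a (he ▸ h)

lemma attach_unique {g : ℕ} (hg : 1 ≤ g) {u x y v₁ v₂ : A.Vert}
    (hu : A.gen u = g) (hx : A.gen x ≤ g) (hy : A.gen y ≤ g) (hxy : x ≠ y)
    (hux : A.adj u x) (huy : A.adj u y) (hxy' : A.adj x y)
    (h1 : A.gen v₁ = g + 1 ∧ {w | A.adj v₁ w ∧ A.gen w ≤ g} = ({u, x, y} : Set A.Vert))
    (h2 : A.gen v₂ = g + 1 ∧ {w | A.adj v₂ w ∧ A.gen w ≤ g} = ({u, x, y} : Set A.Vert)) :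
    v₁ = v₂ := by
  obtain ⟨v, _, huniq⟩ := A.attach g hg u x y hu hx hy hxy hux huy hxy'
  rw [huniq v₁ h1, huniq v₂ h2]

lemma created' {v : A.Vert} (h2 : 2 ≤ A.gen v) :
    ∃ u x y, A.gen u = A.gen v - 1 ∧ A.gen x ≤ A.gen v - 1 ∧ A.gen y ≤ A.gen v - 1 ∧
      A.adj u x ∧ A.adj u y ∧ A.adj x y ∧
      A.adj v u ∧ A.adj v x ∧ A.adj v y ∧
      {w | A.adj v w ∧ A.gen w < A.gen v} = {u, x, y} := by
  obtain ⟨u, x, y, hu, hx, hy, hux, huy, hxy, hset⟩ := A.created v h2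
  have hmu : u ∈ {w | A.adj v w ∧ A.gen w < A.gen v} := by rw [hset]; simp
  have hmx : x ∈ {w | A.adj v w ∧ A.gen w < A.gen v} := by rw [hset]; simp
  have hmy : y ∈ {w | A.adj v w ∧ A.gen w < A.gen v} := by rw [hset]; simp
  exact ⟨u, x, y, hu, hx, hy, hux, huy, hxy, hmu.1, hmx.1, hmy.1, hset⟩

lemma two_children {t : A.Vert} (h2 : 2 ≤ A.gen t) :
    ∃ c₁ c₂ : A.Vert, c₁ ≠ c₂ ∧ A.gen c₁ = A.gen t + 1 ∧ A.gen c₂ = A.gen t + 1 ∧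
      A.adj c₁ t ∧ A.adj c₂ t ∧
      (∀ w, A.adj c₁ w → A.gen w = A.gen t → w = t) ∧
      (∀ w, A.adj c₂ w → A.gen w = A.gen t → w = t) := by
  obtain ⟨u, x, y, hu, hx, hy, hux, huy, hxy, htu, htx, hty, hset⟩ := created' h2
  have hg1 : 1 ≤ A.gen t := by omega
  obtain ⟨c₁, hc₁⟩ := (A.attach (A.gen t) hg1 t u x rfl (by omega) (by omega)
    (adj_ne hux) htu htx hux).exists
  obtain ⟨c₂, hc₂⟩ := (A.attach (A.gen t) hg1 t u y rfl (by omega) (by omega)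
    (adj_ne huy) htu hty huy).exists
  have hxt : x ≠ t := fun h => (adj_ne htx) h.symm
  have hxu : x ≠ u := fun h => (adj_ne hux) h.symm
  have hne : c₁ ≠ c₂ := by
    intro h
    have hx1 : x ∈ {w | A.adj c₁ w ∧ A.gen w ≤ A.gen t} := by rw [hc₁.2]; simp
    rw [h, hc₂.2] at hx1
    rcases hx1 with h' | h' | h'
    · exact hxt h'
    · exact hxu h'
    · exact adj_ne hxy (by simpa using h')
  have hct : ∀ c, A.gen c = A.gen t + 1 →
      {w | A.adj c w ∧ A.gen w ≤ A.gen t} = ({t, u, x} : Set A.Vert) ∨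
      {w | A.adj c w ∧ A.gen w ≤ A.gen t} = ({t, u, y} : Set A.Vert) →
      A.adj c t ∧ (∀ w, A.adj c w → A.gen w = A.gen t → w = t) := by
    intro c hcg hcs
    rcases hcs with hcs | hcs
    · constructor
      · have : t ∈ {w | A.adj c w ∧ A.gen w ≤ A.gen t} := by rw [hcs]; simp
        exact this.1
      · intro w hw hwg
        have : w ∈ {w | A.adj c w ∧ A.gen w ≤ A.gen t} := ⟨hw, by omega⟩
        rw [hcs] at this
        rcases this with h' | h' | h'
        · exact h'
        · exfalso; subst h'; omega
        · exfalso; simp only [Set.mem_singleton_iff] at h'; subst h'; omega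
    · constructor
      · have : t ∈ {w | A.adj c w ∧ A.gen w ≤ A.gen t} := by rw [hcs]; simp
        exact this.1
      · intro w hw hwg
        have : w ∈ {w | A.adj c w ∧ A.gen w ≤ A.gen t} := ⟨hw, by omega⟩
        rw [hcs] at this
        rcases this with h' | h' | h'
        · exact h'
        · exfalso; subst h'; omega
        · exfalso; simp only [Set.mem_singleton_iff] at h'; subst h'; omega
  obtain ⟨ha₁, hp₁⟩ := hct c₁ hc₁.1 (Or.inl hc₁.2)
  obtain ⟨ha₂, hp₂⟩ := hct c₂ hc₂.1 (Or.inr hc₂.2)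
  exact ⟨c₁, c₂, hne, hc₁.1, hc₂.1, ha₁, ha₂, hp₁, hp₂⟩

lemma gen1_other {x : A.Vert} (hx : A.gen x = 1) :
    ∃ b c : A.Vert, b ≠ c ∧ x ≠ b ∧ x ≠ c ∧ A.gen b = 1 ∧ A.gen c = 1 := by
  obtain ⟨a, b, c, hab, hac, hbc, hU⟩ := A.U1_card
  have ga : A.gen a = 1 := by
    have : a ∈ {v | A.gen v = 1} := by rw [hU]; simp
    exact this
  have gb : A.gen b = 1 := by
    have : b ∈ {v | A.gen v = 1} := by rw [hU]; simp
    exact this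
  have gc : A.gen c = 1 := by
    have : c ∈ {v | A.gen v = 1} := by rw [hU]; simp
    exact this
  have hxm : x ∈ ({a, b, c} : Set A.Vert) := by rw [← hU]; exact hx
  rcases hxm with h | h | h
  · subst h; exact ⟨b, c, hbc, hab, hac, gb, gc⟩
  · subst h; exact ⟨a, c, hac, fun h => hab h.symm, hbc, ga, gc⟩
  · simp only [Set.mem_singleton_iff] at h; subst h
    exact ⟨a, b, hab, fun h => hac h.symm, fun h => hbc h.symm, ga, gb⟩

/-- Two distinct vertices of generation `g` adjacent to a given generation-1 vertex. -/
lemma gen1_pair {x : A.Vert} (hx : A.gen x = 1) : ∀ g, 3 ≤ g →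
    ∃ z₁ z₂ : A.Vert, z₁ ≠ z₂ ∧ A.gen z₁ = g ∧ A.gen z₂ = g ∧ A.adj z₁ x ∧ A.adj z₂ x := by
  obtain ⟨b, c, hbc, hxb, hxc, gb, gc⟩ := gen1_other hx
  have hadjxb : A.adj x b := A.U1_complete x b hx gb hxb
  have hadjxc : A.adj x c := A.U1_complete x c hx gc hxc
  -- invariant
  have main : ∀ g, 3 ≤ g → ∃ z₁ z₂ p₁ p₂ : A.Vert,
      A.gen z₁ = g ∧ A.gen z₂ = g ∧ A.gen p₁ = g - 1 ∧ A.gen p₂ = g - 1 ∧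
      {w | A.adj z₁ w ∧ A.gen w ≤ g - 1} = {p₁, x, b} ∧
      {w | A.adj z₂ w ∧ A.gen w ≤ g - 1} = {p₂, x, c} := by
    intro g hg
    induction g with
    | zero => omega
    | succ g ih =>
      rcases Nat.lt_or_ge g 3 with hg3 | hg3
      · -- base case : g + 1 = 3
        have hg2 : g = 2 := by omega
        subst hg2
        obtain ⟨w, hwg, hws⟩ := (A.attach 1 le_rfl x b c hx (by omega) (by omega) hbc
          hadjxb hadjxc (A.U1_complete b c gb gc hbc)).exists
        have hwx : A.adj w x := by
          have : x ∈ {w' | A.adj w w' ∧ A.gen w' ≤ 1} := by rw [hws]; simp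
          exact this.1
        have hwb : A.adj w b := by
          have : b ∈ {w' | A.adj w w' ∧ A.gen w' ≤ 1} := by rw [hws]; simp
          exact this.1
        have hwc : A.adj w c := by
          have : c ∈ {w' | A.adj w w' ∧ A.gen w' ≤ 1} := by rw [hws]; simp
          exact this.1
        obtain ⟨z₁, hz₁g, hz₁s⟩ := (A.attach 2 (by omega) w x b hwg (by omega) (by omega)
          hxb hwx hwb hadjxb).exists
        obtain ⟨z₂, hz₂g, hz₂s⟩ := (A.attach 2 (by omega) w x c hwg (by omega) (by omega)
          hxc hwx hwc hadjxc).exists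
        exact ⟨z₁, z₂, w, w, hz₁g, hz₂g, hwg, hwg, hz₁s, hz₂s⟩
      · -- step
        obtain ⟨z₁, z₂, p₁, p₂, hz₁g, hz₂g, hp₁g, hp₂g, hs₁, hs₂⟩ := ih hg3
        have hz₁x : A.adj z₁ x := by
          have : x ∈ {w | A.adj z₁ w ∧ A.gen w ≤ g - 1} := by rw [hs₁]; simp
          exact this.1
        have hz₁b : A.adj z₁ b := by
          have : b ∈ {w | A.adj z₁ w ∧ A.gen w ≤ g - 1} := by rw [hs₁]; simp
          exact this.1
        have hz₂x : A.adj z₂ x := by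
          have : x ∈ {w | A.adj z₂ w ∧ A.gen w ≤ g - 1} := by rw [hs₂]; simp
          exact this.1
        have hz₂c : A.adj z₂ c := by
          have : c ∈ {w | A.adj z₂ w ∧ A.gen w ≤ g - 1} := by rw [hs₂]; simp
          exact this.1
        obtain ⟨z₁', hz₁'g, hz₁'s⟩ := (A.attach g (by omega) z₁ x b hz₁g (by omega) (by omega)
          hxb hz₁x hz₁b hadjxb).exists
        obtain ⟨z₂', hz₂'g, hz₂'s⟩ := (A.attach g (by omega) z₂ x c hz₂g (by omega) (by omega)
          hxc hz₂x hz₂c hadjxc).exists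
        refine ⟨z₁', z₂', z₁, z₂, hz₁'g, hz₂'g, by omega, by omega, ?_, ?_⟩
        · simpa using hz₁'s
        · simpa using hz₂'s
  intro g hg
  obtain ⟨z₁, z₂, p₁, p₂, hz₁g, hz₂g, hp₁g, hp₂g, hs₁, hs₂⟩ := main g hg
  have hz₁x : A.adj z₁ x := by
    have : x ∈ {w | A.adj z₁ w ∧ A.gen w ≤ g - 1} := by rw [hs₁]; simp
    exact this.1
  have hz₂x : A.adj z₂ x := by
    have : x ∈ {w | A.adj z₂ w ∧ A.gen w ≤ g - 1} := by rw [hs₂]; simp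
    exact this.1
  refine ⟨z₁, z₂, ?_, hz₁g, hz₂g, hz₁x, hz₂x⟩
  intro h
  have hb1 : b ∈ {w | A.adj z₁ w ∧ A.gen w ≤ g - 1} := by rw [hs₁]; simp
  rw [h, hs₂] at hb1
  rcases hb1 with h' | h' | h'
  · subst h'; omega
  · exact hxb h'.symm
  · simp only [Set.mem_singleton_iff] at h'; exact hbc h'

set_option maxHeartbeats 1000000 in
/-- A finite set of size at most `3^(g-2)` covering generation `g`. -/
lemma cover (A : ApollonianNetwork) : ∀ g, 2 ≤ g →
    ∃ F : Finset A.Vert, F.card ≤ 3 ^ (g - 2) ∧ ∀ v, A.gen v = g → v ∈ F := by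
  intro g
  induction g with
  | zero => omega
  | succ g ih =>
    intro _
    rcases Nat.lt_or_ge g 2 with hg2 | hg2
    · -- base case : g + 1 = 2
      have hg1 : g = 1 := by omega
      subst hg1
      obtain ⟨a, b, c, hab, hac, hbc, hU⟩ := A.U1_card
      have ga : A.gen a = 1 := by
        have : a ∈ {v | A.gen v = 1} := by rw [hU]; simp
        exact this
      have gb : A.gen b = 1 := by
        have : b ∈ {v | A.gen v = 1} := by rw [hU]; simp
        exact this
      have gc : A.gen c = 1 := by
        have : c ∈ {v | A.gen v = 1} := by rw [hU]; simp
        exact this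
      obtain ⟨w, hwg, hws⟩ := (A.attach 1 le_rfl a b c ga (by omega) (by omega) hbc
        (A.U1_complete a b ga gb hab) (A.U1_complete a c ga gc hac)
        (A.U1_complete b c gb gc hbc)).exists
      refine ⟨{w}, by simp, ?_⟩
      intro v hv
      obtain ⟨u, x, y, hu, hx, hy, hux, huy, hxy, hvu, hvx, hvy, hset⟩ :=
        created' (v := v) (by omega)
      rw [hv] at hu hx hy hset
      have hgu : A.gen u = 1 := by omega
      have hgx : A.gen x = 1 := by have := A.gen_pos x; omega
      have hgy : A.gen y = 1 := by have := A.gen_pos y; omega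
      have hset' : {w' | A.adj v w' ∧ A.gen w' ≤ 1} = ({u, x, y} : Set A.Vert) := by
        rw [← hset]; ext w'; constructor
        · rintro ⟨h1, h2⟩; exact ⟨h1, by omega⟩
        · rintro ⟨h1, h2⟩; exact ⟨h1, by omega⟩
      have hmu : u ∈ ({a, b, c} : Set A.Vert) := by rw [← hU]; exact hgu
      have hmx : x ∈ ({a, b, c} : Set A.Vert) := by rw [← hU]; exact hgx
      have hmy : y ∈ ({a, b, c} : Set A.Vert) := by rw [← hU]; exact hgy
      have hnux : u ≠ x := adj_ne hux
      have hnuy : u ≠ y := adj_ne huy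
      have hnxy : x ≠ y := adj_ne hxy
      have hsets : ({u, x, y} : Set A.Vert) = {a, b, c} := by
        simp only [Set.mem_insert_iff, Set.mem_singleton_iff] at hmu hmx hmy
        rcases hmu with rfl | rfl | rfl <;> rcases hmx with rfl | rfl | rfl <;>
          rcases hmy with rfl | rfl | rfl <;>
          first
            | (exact absurd rfl hnux)
            | (exact absurd rfl hnuy)
            | (exact absurd rfl hnxy)
            | (ext w'; simp only [Set.mem_insert_iff, Set.mem_singleton_iff]; try tauto)
      have hveq : v = w := attach_unique le_rfl ga (by omega) (by omega) hbc
        (A.U1_complete a b ga gb hab) (A.U1_complete a c ga gc hac)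
        (A.U1_complete b c gb gc hbc)
        ⟨by omega, by rw [hset', hsets]⟩ ⟨hwg, hws⟩
      simp [hveq]
    · -- step
      obtain ⟨F, hFc, hFm⟩ := ih hg2
      have h3 : ∀ u : A.Vert, ∃ c₁ c₂ c₃ : A.Vert, ∀ v, A.gen v = g + 1 → A.adj v u →
          A.gen u = g → (v = c₁ ∨ v = c₂ ∨ v = c₃) := by
        intro u
        by_cases hug : A.gen u = g
        · obtain ⟨p, q, r, hp, hq, hr, hpq, hpr, hqr, hup, huq, hur, huset⟩ :=
            created' (v := u) (by omega)
          rw [hug] at hp hq hr huset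
          obtain ⟨c₁, hc₁⟩ := (A.attach g (by omega) u p q hug (by omega) (by omega)
            (adj_ne hpq) hup huq hpq).exists
          obtain ⟨c₂, hc₂⟩ := (A.attach g (by omega) u p r hug (by omega) (by omega)
            (adj_ne hpr) hup hur hpr).exists
          obtain ⟨c₃, hc₃⟩ := (A.attach g (by omega) u q r hug (by omega) (by omega)
            (adj_ne hqr) huq hur hqr).exists
          refine ⟨c₁, c₂, c₃, ?_⟩
          intro v hv hvu _
          obtain ⟨u', x, y, hu', hx', hy', hux', huy', hxy', hvu', hvx', hvy', hsetv⟩ :=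
            created' (v := v) (by omega)
          rw [hv] at hu' hx' hy' hsetv
          simp only [Nat.add_sub_cancel] at hu' hx' hy'
          -- x and y have generation < g
          have hgx : A.gen x < g := by
            rcases Nat.lt_or_ge (A.gen x) g with h | h
            · exact h
            · exfalso
              have hxg : A.gen x = g := by omega
              have := A.adj_gen u' x hux' (by omega)
              omega
          have hgy : A.gen y < g := by
            rcases Nat.lt_or_ge (A.gen y) g with h | h
            · exact h
            · exfalso
              have hyg : A.gen y = g := by omega
              have := A.adj_gen u' y huy' (by omega)
              omega
          -- u is a member of v's triangle of generation g, hence u = u'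
          have hmu : u ∈ ({u', x, y} : Set A.Vert) := by
            rw [← hsetv]; exact ⟨hvu, by omega⟩
          have huu' : u = u' := by
            rcases hmu with h | h | h
            · exact h
            · exfalso; subst h; omega
            · exfalso; simp only [Set.mem_singleton_iff] at h; subst h; omega
          subst huu'
          -- x, y belong to the triangle of u
          have hmx : x ∈ ({p, q, r} : Set A.Vert) := by
            rw [← huset]; exact ⟨hux', by omega⟩
          have hmy : y ∈ ({p, q, r} : Set A.Vert) := by
            rw [← huset]; exact ⟨huy', by omega⟩
          have hnxy : x ≠ y := adj_ne hxy'
          -- v's low neighbour set, with ≤ g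
          have hsetv' : {w | A.adj v w ∧ A.gen w ≤ g} = ({u, x, y} : Set A.Vert) := by
            rw [← hsetv]; ext w'; constructor
            · rintro ⟨h1, h2⟩; exact ⟨h1, by omega⟩
            · rintro ⟨h1, h2⟩; exact ⟨h1, by omega⟩
          have key : ∀ a b : A.Vert, ({u, x, y} : Set A.Vert) = {u, a, b} →
              A.gen a ≤ g → A.gen b ≤ g → a ≠ b → A.adj u a → A.adj u b → A.adj a b →
              ∀ cc, A.gen cc = g + 1 → {w | A.adj cc w ∧ A.gen w ≤ g} = {u, a, b} → v = cc := by
            intro a b hab hga hgb hnab hua hub haab cc hccg hccs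
            exact attach_unique (g := g) (by omega) hug hga hgb hnab hua hub haab
              ⟨hv, by rw [hsetv', hab]⟩ ⟨hccg, hccs⟩
          simp only [Set.mem_insert_iff, Set.mem_singleton_iff] at hmx hmy
          have swap : ∀ a b : A.Vert, ({u, a, b} : Set A.Vert) = {u, b, a} := by
            intro a b; ext w'; simp only [Set.mem_insert_iff, Set.mem_singleton_iff]; tauto
          rcases hmx with h | h | h <;> rcases hmy with h' | h' | h'
          · exact absurd (h.trans h'.symm) hnxy
          · exact Or.inl (key p q (by rw [h, h']) (by omega) (by omega) (adj_ne hpq)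
              hup huq hpq c₁ hc₁.1 hc₁.2)
          · exact Or.inr (Or.inl (key p r (by rw [h, h']) (by omega) (by omega) (adj_ne hpr)
              hup hur hpr c₂ hc₂.1 hc₂.2))
          · exact Or.inl (key p q (by rw [h, h']; exact swap q p) (by omega) (by omega)
              (adj_ne hpq) hup huq hpq c₁ hc₁.1 hc₁.2)
          · exact absurd (h.trans h'.symm) hnxy
          · exact Or.inr (Or.inr (key q r (by rw [h, h']) (by omega) (by omega) (adj_ne hqr)
              huq hur hqr c₃ hc₃.1 hc₃.2))
          · exact Or.inr (Or.inl (key p r (by rw [h, h']; exact swap r p) (by omega) (by omega)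
              (adj_ne hpr) hup hur hpr c₂ hc₂.1 hc₂.2))
          · exact Or.inr (Or.inr (key q r (by rw [h, h']; exact swap r q) (by omega) (by omega)
              (adj_ne hqr) huq hur hqr c₃ hc₃.1 hc₃.2))
          · exact absurd (h.trans h'.symm) hnxy
        · exact ⟨u, u, u, fun v _ _ h => absurd h hug⟩
      classical
      choose f₁ f₂ f₃ hf using h3
      refine ⟨F.biUnion (fun u => {f₁ u, f₂ u, f₃ u}), ?_, ?_⟩
      · calc (F.biUnion (fun u => {f₁ u, f₂ u, f₃ u})).card
            ≤ ∑ u ∈ F, ({f₁ u, f₂ u, f₃ u} : Finset A.Vert).card :=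
              Finset.card_biUnion_le
          _ ≤ ∑ _u ∈ F, 3 := Finset.sum_le_sum (fun u _ => by
              refine (Finset.card_insert_le _ _).trans (Nat.succ_le_succ ?_)
              refine (Finset.card_insert_le _ _).trans (Nat.succ_le_succ ?_)
              simp)
          _ = 3 * F.card := by rw [Finset.sum_const]; ring
          _ ≤ 3 * 3 ^ (g - 2) := by omega
          _ = 3 ^ (g + 1 - 2) := by
              rw [show g + 1 - 2 = (g - 2) + 1 by omega, pow_succ]; ring
      · intro v hv
        obtain ⟨u', x, y, hu', _, _, _, _, _, hvu', _, _, _⟩ := created' (v := v) (by omega)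
        rw [hv] at hu'
        simp only [Nat.add_sub_cancel] at hu'
        have huF : u' ∈ F := hFm u' hu'
        rw [Finset.mem_biUnion]
        refine ⟨u', huF, ?_⟩
        rcases hf u' v hv hvu' hu' with h | h | h <;> simp [h]

lemma subtype_adj {A : ApollonianNetwork} {k : ℕ} {a b : {v : A.Vert // A.gen v ≤ k}}
    (h : A.adj a.1 b.1) : (A.G k).Adj a b := h

/-- A binary tree of descendants of `z`, `j` generations down, within distance `j`. -/
lemma tree (k : ℕ) : ∀ (j : ℕ) (z : {v : A.Vert // A.gen v ≤ k}), 2 ≤ A.gen z.1 →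
    A.gen z.1 + j ≤ k →
    ∃ T : Finset {v : A.Vert // A.gen v ≤ k}, 2 ^ j ≤ T.card ∧
      ∀ s ∈ T, A.gen s.1 = A.gen z.1 + j ∧ ∃ p : (A.G k).Walk s z, p.length ≤ j := by
  intro j
  induction j with
  | zero =>
    intro z h2 hk
    refine ⟨{z}, by simp, ?_⟩
    intro s hs
    simp only [Finset.mem_singleton] at hs
    subst hs
    exact ⟨by simp, SimpleGraph.Walk.nil, by simp⟩
  | succ j ih =>
    intro z h2 hk
    obtain ⟨T, hcard, hT⟩ := ih z h2 (by omega)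
    have hch : ∀ t ∈ T, ∃ c₁ c₂ : {v : A.Vert // A.gen v ≤ k}, c₁ ≠ c₂ ∧
        A.gen c₁.1 = A.gen z.1 + (j + 1) ∧ A.gen c₂.1 = A.gen z.1 + (j + 1) ∧
        A.adj c₁.1 t.1 ∧ A.adj c₂.1 t.1 ∧
        (∀ w, A.adj c₁.1 w → A.gen w = A.gen t.1 → w = t.1) ∧
        (∀ w, A.adj c₂.1 w → A.gen w = A.gen t.1 → w = t.1) := by
      intro t ht
      have htg : A.gen t.1 = A.gen z.1 + j := (hT t ht).1
      obtain ⟨c₁, c₂, hne, hg₁, hg₂, ha₁, ha₂, hp₁, hp₂⟩ :=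
        two_children (t := t.1) (by omega)
      refine ⟨⟨c₁, by omega⟩, ⟨c₂, by omega⟩, ?_, by simp; omega, by simp; omega,
        ha₁, ha₂, hp₁, hp₂⟩
      intro h
      exact hne (congrArg Subtype.val h)
    classical
    choose f₁ f₂ hne hg₁ hg₂ ha₁ ha₂ hp₁ hp₂ using hch
    refine ⟨T.attach.biUnion (fun t => {f₁ t.1 t.2, f₂ t.1 t.2}), ?_, ?_⟩
    · have hdisj : ∀ t ∈ T.attach, ∀ t' ∈ T.attach, t ≠ t' →
          Disjoint ({f₁ t.1 t.2, f₂ t.1 t.2} : Finset _) {f₁ t'.1 t'.2, f₂ t'.1 t'.2} := by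
        intro t _ t' _ htt'
        rw [Finset.disjoint_left]
        intro c hc hc'
        have htne : t.1 ≠ t'.1 := fun h => htt' (Subtype.ext h)
        have hgt : A.gen t.1.1 = A.gen z.1 + j := (hT t.1 t.2).1
        have hgt' : A.gen t'.1.1 = A.gen z.1 + j := (hT t'.1 t'.2).1
        have hadj' : A.adj c.1 t'.1.1 := by
          rcases Finset.mem_insert.mp hc' with h | h
          · subst h; exact ha₁ t'.1 t'.2
          · rw [Finset.mem_singleton] at h; subst h; exact ha₂ t'.1 t'.2
        have hpar : ∀ w, A.adj c.1 w → A.gen w = A.gen t.1.1 → w = t.1.1 := by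
          rcases Finset.mem_insert.mp hc with h | h
          · subst h; exact hp₁ t.1 t.2
          · rw [Finset.mem_singleton] at h; subst h; exact hp₂ t.1 t.2
        exact htne (Subtype.ext (hpar t'.1.1 hadj' (by omega)).symm)
      rw [Finset.card_biUnion hdisj]
      have h2' : ∀ t ∈ T.attach, ({f₁ t.1 t.2, f₂ t.1 t.2} : Finset _).card = 2 := by
        intro t _
        rw [Finset.card_insert_of_notMem (by simp [hne t.1 t.2]), Finset.card_singleton]
      rw [Finset.sum_congr rfl h2', Finset.sum_const, Finset.card_attach, smul_eq_mul,
        pow_succ]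
      omega
    · intro s hs
      rw [Finset.mem_biUnion] at hs
      obtain ⟨t, _, hst⟩ := hs
      obtain ⟨p, hp⟩ := (hT t.1 t.2).2
      have hgt : A.gen t.1.1 = A.gen z.1 + j := (hT t.1 t.2).1
      have hadj : A.adj s.1 t.1.1 ∧ A.gen s.1 = A.gen z.1 + (j + 1) := by
        rcases Finset.mem_insert.mp hst with h | h
        · subst h; exact ⟨ha₁ t.1 t.2, hg₁ t.1 t.2⟩
        · rw [Finset.mem_singleton] at h; subst h; exact ⟨ha₂ t.1 t.2, hg₂ t.1 t.2⟩
      refine ⟨hadj.2, SimpleGraph.Walk.cons (subtype_adj hadj.1) p, ?_⟩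
      simp only [SimpleGraph.Walk.length_cons]
      omega

open Classical in
/-- If `T ⊆ S` consists of vertices within distance `D` of `v` and `2^D ≤ 2 |T|`,
then the weight at `v` is at least 1. -/
lemma key {k : ℕ} (S T : Finset {v : A.Vert // A.gen v ≤ k})
    (hTS : T ⊆ S) (v : {v : A.Vert // A.gen v ≤ k}) (D : ℕ)
    (hD : ∀ s ∈ T, ∃ p : (A.G k).Walk s v, p.length ≤ D)
    (hcard : 2 ^ D ≤ 2 * T.card) : 1 ≤ expWeight (A.G k) S v := by
  have hterm : ∀ s ∈ T, 2 * (2 : ℝ)⁻¹ ^ D ≤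
      (if (A.G k).Reachable s v then 2 * (2 : ℝ)⁻¹ ^ (A.G k).dist s v else 0) := by
    intro s hs
    obtain ⟨p, hp⟩ := hD s hs
    rw [if_pos ⟨p⟩]
    have hd : (A.G k).dist s v ≤ D := le_trans (SimpleGraph.dist_le p) hp
    have hpow : (2 : ℝ)⁻¹ ^ D ≤ (2 : ℝ)⁻¹ ^ (A.G k).dist s v :=
      pow_le_pow_of_le_one (by norm_num) (by norm_num) hd
    linarith
  have h1 : (T.card : ℝ) * (2 * (2 : ℝ)⁻¹ ^ D) ≤
      ∑ u ∈ T, (if (A.G k).Reachable u v then 2 * (2 : ℝ)⁻¹ ^ (A.G k).dist u v else 0) := by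
    calc (T.card : ℝ) * (2 * (2 : ℝ)⁻¹ ^ D)
        = ∑ _u ∈ T, 2 * (2 : ℝ)⁻¹ ^ D := by rw [Finset.sum_const, nsmul_eq_mul]
      _ ≤ _ := Finset.sum_le_sum hterm
  have h2 : ∑ u ∈ T, (if (A.G k).Reachable u v then 2 * (2 : ℝ)⁻¹ ^ (A.G k).dist u v else 0) ≤
      expWeight (A.G k) S v := by
    apply Finset.sum_le_sum_of_subset_of_nonneg hTS
    intro i _ _
    split
    · positivity
    · exact le_rfl
  have h0 : (1 : ℝ) ≤ (T.card : ℝ) * (2 * (2 : ℝ)⁻¹ ^ D) := by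
    have hc : (2 : ℝ) ^ D ≤ 2 * (T.card : ℝ) := by exact_mod_cast hcard
    have hpow : (0 : ℝ) < 2 ^ D := by positivity
    rw [show (T.card : ℝ) * (2 * (2 : ℝ)⁻¹ ^ D) = (2 * T.card) / 2 ^ D by
      rw [inv_pow]; field_simp]
    rw [le_div_iff₀ hpow]
    linarith
  linarith

end ApoAux

theorem stmt0 (A : ApollonianNetwork) (k : ℕ) (hk : 6 ≤ k) :
    porousExpDomNum (A.G k) ≤ (3 ^ (k - 5) : ℕ∞) := by
  classical
  obtain ⟨F, hFc, hFm⟩ := ApoAux.cover A (k - 3) (by omega)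
  let S : Finset {v : A.Vert // A.gen v ≤ k} :=
    (F.subtype (fun v => A.gen v ≤ k)).filter (fun v => A.gen v.1 = k - 3)
  have hSmem : ∀ s : {v : A.Vert // A.gen v ≤ k}, A.gen s.1 = k - 3 → s ∈ S := by
    intro s hs
    simp only [S, Finset.mem_filter, Finset.mem_subtype]
    exact ⟨hFm s.1 hs, hs⟩
  have hScard : S.card ≤ 3 ^ (k - 5) := by
    have h1 : S.card ≤ F.card := by
      apply Finset.card_le_card_of_injOn (fun v => v.1)
      · intro a ha
        simp only [S, Finset.mem_coe, Finset.mem_filter, Finset.mem_subtype] at ha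
        exact ha.1
      · exact fun a _ b _ h => Subtype.ext h
    have h2 : k - 3 - 2 = k - 5 := by omega
    rw [h2] at hFc
    omega
  have hdom : IsPorousExpDomSet (A.G k) S := by
    intro v
    have hv1 : 1 ≤ A.gen v.1 := A.gen_pos v.1
    have hvk : A.gen v.1 ≤ k := v.2
    rcases Nat.lt_or_ge (A.gen v.1) 2 with hm | hm
    · -- generation 1
      have hgv : A.gen v.1 = 1 := by omega
      obtain ⟨z₁, z₂, hne, hz₁, hz₂, ha₁, ha₂⟩ := ApoAux.gen1_pair hgv (k - 3) (by omega)
      refine ApoAux.key S {⟨z₁, by omega⟩} (by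
          intro s hs
          simp only [Finset.mem_singleton] at hs
          subst hs
          exact hSmem _ hz₁) v 1 ?_ ?_
      · intro s hs
        simp only [Finset.mem_singleton] at hs
        subst hs
        exact ⟨SimpleGraph.Walk.cons (ApoAux.subtype_adj ha₁) SimpleGraph.Walk.nil, by simp⟩
      · simp
    rcases Nat.lt_or_ge (A.gen v.1) (k - 2) with hm2 | hm2
    · -- generation between 2 and k - 3
      obtain ⟨T, hcard, hT⟩ := ApoAux.tree k (k - 3 - A.gen v.1) v hm (by omega)
      refine ApoAux.key S T (by
          intro s hs
          exact hSmem s (by have := (hT s hs).1; omega)) v (k - 3 - A.gen v.1)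
          (fun s hs => (hT s hs).2) (by omega)
    · -- generation at least k - 2 : find a low neighbour
      obtain ⟨u, x, y, hu, hx, hy, hux, huy, hxy, hvu, hvx, hvy, hset⟩ :=
        ApoAux.created' (v := v.1) (by omega)
      have hz : ∃ z, A.adj v.1 z ∧ 1 ≤ A.gen z ∧ A.gen z ≤ k - 3 := by
        by_cases hu3 : A.gen u ≤ k - 3
        · exact ⟨u, hvu, A.gen_pos u, hu3⟩
        by_cases hx3 : A.gen x ≤ k - 3
        · exact ⟨x, hvx, A.gen_pos x, hx3⟩
        by_cases hy3 : A.gen y ≤ k - 3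
        · exact ⟨y, hvy, A.gen_pos y, hy3⟩
        exfalso
        have hnux : A.gen u ≠ A.gen x := by
          intro h
          have := A.adj_gen u x hux h
          omega
        have hnuy : A.gen u ≠ A.gen y := by
          intro h
          have := A.adj_gen u y huy h
          omega
        have hnxy : A.gen x ≠ A.gen y := by
          intro h
          have := A.adj_gen x y hxy h
          omega
        omega
      obtain ⟨z, hvz, hz1, hz3⟩ := hz
      rcases Nat.lt_or_ge (A.gen z) 2 with hzlt | hzge
      · -- low neighbour of generation 1
        have hgz : A.gen z = 1 := by omega
        obtain ⟨z₁, z₂, hne, hz₁, hz₂, ha₁, ha₂⟩ := ApoAux.gen1_pair hgz (k - 3) (by omega)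
        have hzk : A.gen z ≤ k := by omega
        have hz1k : A.gen z₁ ≤ k := by omega
        have hz2k : A.gen z₂ ≤ k := by omega
        have hT2 : ({⟨z₁, hz1k⟩, ⟨z₂, hz2k⟩} :
            Finset {v : A.Vert // A.gen v ≤ k}).card = 2 :=
          Finset.card_pair (fun h => hne (congrArg Subtype.val h))
        refine ApoAux.key S {⟨z₁, hz1k⟩, ⟨z₂, hz2k⟩} (by
            intro s hs
            rcases Finset.mem_insert.mp hs with h | h
            · subst h; exact hSmem _ hz₁
            · rw [Finset.mem_singleton] at h; subst h; exact hSmem _ hz₂) v 2 ?_ ?_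
        · intro s hs
          have hzadj : (A.G k).Adj ⟨z, hzk⟩ v := ApoAux.subtype_adj (A.adj_symm _ _ hvz)
          rcases Finset.mem_insert.mp hs with h | h
          · subst h
            exact ⟨SimpleGraph.Walk.cons (ApoAux.subtype_adj ha₁)
              (SimpleGraph.Walk.cons hzadj SimpleGraph.Walk.nil), by simp⟩
          · rw [Finset.mem_singleton] at h; subst h
            exact ⟨SimpleGraph.Walk.cons (ApoAux.subtype_adj ha₂)
              (SimpleGraph.Walk.cons hzadj SimpleGraph.Walk.nil), by simp⟩
        · rw [hT2]; norm_num
      · -- low neighbour of generation between 2 and k - 3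
        have hzk : A.gen z ≤ k := by omega
        obtain ⟨T, hcard, hT⟩ := ApoAux.tree k (k - 3 - A.gen z) ⟨z, hzk⟩ hzge
          (by show A.gen z + (k - 3 - A.gen z) ≤ k; omega)
        refine ApoAux.key S T (by
            intro s hs
            exact hSmem s (by have := (hT s hs).1; simp at this; omega)) v
            (k - 3 - A.gen z + 1) ?_ ?_
        · intro s hs
          obtain ⟨p, hp⟩ := (hT s hs).2
          refine ⟨p.concat (ApoAux.subtype_adj (A.adj_symm _ _ hvz)), ?_⟩
          rw [SimpleGraph.Walk.length_concat]
          omega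
        · rw [pow_succ]
          omega
  calc porousExpDomNum (A.G k) ≤ (S.card : ℕ∞) := sInf_le ⟨S, hdom, rfl⟩
    _ ≤ (3 ^ (k - 5) : ℕ∞) := by exact_mod_cast hScard
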